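/- Let |φ⁺⟩ = (|00⟩+|11⟩)/√2 and consider the qubit POVMs M_i^0 = (2/3)|v_i⟩⟨v_i|, M_i^1 = (2/3)|ṽ_i⟩⟨ṽ_i|, M_i^2 = (2/3)|i⟩⟨i| with |v_0⟩ = (|0⟩+√3|1⟩)/2, |v_1⟩ = (√3|0⟩−|1⟩)/2, |ṽ_i⟩ = diag(1,−1)|v_i⟩. Define Bob's projective measurements N_i^0 = (|v_i⟩⟨v_i|)ᵀ, N_i^1 = (|ṽ_i⟩⟨ṽ_i|)ᵀ, N_i^2 = |i⟩⟨i|. Then (1/2)∑_{i=0}^{1}∑_{a=0}^{2} ⟨φ⁺|M_i^a ⊗ N_i^a|φ⁺⟩ = 1, i.e., the two POVMs are perfectly distinguishable with the maximally entangled state. -/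

import Mathlib

open Matrix Complex BigOperators Kronecker

noncomputable section

/-- `|v_0⟩ = (|0⟩ + √3|1⟩)/2` and `|v_1⟩ = (√3|0⟩ − |1⟩)/2`. -/
def v : Fin 2 → Fin 2 → ℂ := ![![1 / 2, Real.sqrt 3 / 2], ![Real.sqrt 3 / 2, -(1 / 2)]]

/-- `|ṽ_i⟩ = diag(1,−1)|v_i⟩`. -/
def vt (i : Fin 2) : Fin 2 → ℂ := (Matrix.diagonal ![1, -1]) *ᵥ v i

/-- Standard basis vector `|i⟩` of `ℂ²`. -/
def ket (i : Fin 2) : Fin 2 → ℂ := fun j => if j = i then 1 else 0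

/-- Alice's POVM elements `M_i^a`. -/
def M (i : Fin 2) : Fin 3 → Matrix (Fin 2) (Fin 2) ℂ :=
  ![(2 / 3 : ℂ) • vecMulVec (v i) (star (v i)),
    (2 / 3 : ℂ) • vecMulVec (vt i) (star (vt i)),
    (2 / 3 : ℂ) • vecMulVec (ket i) (star (ket i))]

/-- Bob's projective measurement elements `N_i^0 = (|v_i⟩⟨v_i|)ᵀ`,
`N_i^1 = (|ṽ_i⟩⟨ṽ_i|)ᵀ`, `N_i^2 = |i⟩⟨i|`. -/
def N (i : Fin 2) : Fin 3 → Matrix (Fin 2) (Fin 2) ℂ :=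
  ![(vecMulVec (v i) (star (v i)))ᵀ,
    (vecMulVec (vt i) (star (vt i)))ᵀ,
    vecMulVec (ket i) (star (ket i))]

/-- The two-qubit maximally entangled state `|φ⁺⟩ = (|00⟩+|11⟩)/√2`. -/
def phiPlus : Fin 2 × Fin 2 → ℂ :=
  fun p => if p.1 = p.2 then (1 / Real.sqrt 2 : ℂ) else 0

lemma vt_eq : vt = ![![(1:ℂ)/2, -(Real.sqrt 3/2)], ![(Real.sqrt 3/2 : ℂ), (1:ℂ)/2]] := by
  funext i j
  fin_cases i <;> fin_cases j <;>
    simp [vt, v, Matrix.mulVec, Matrix.diagonal, dotProduct, Fin.sum_univ_succ]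

lemma key (A B : Matrix (Fin 2) (Fin 2) ℂ) :
    star phiPlus ⬝ᵥ ((A ⊗ₖ B) *ᵥ phiPlus) =
      (A 0 0 * B 0 0 + A 0 1 * B 0 1 + A 1 0 * B 1 0 + A 1 1 * B 1 1) / 2 := by
  have h2 : (Real.sqrt 2 : ℂ) * (Real.sqrt 2 : ℂ) = 2 := by
    rw [← Complex.ofReal_mul, Real.mul_self_sqrt (by norm_num)]; norm_num
  have h2' : (Real.sqrt 2 : ℂ) ≠ 0 := fun h => by simp [h] at h2
  simp only [phiPlus, dotProduct, mulVec, Fintype.sum_prod_type, Fin.sum_univ_succ,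
    Fin.sum_univ_zero, kroneckerMap_apply, Pi.star_apply, Complex.star_def, map_div₀,
    _root_.map_one, Complex.conj_ofReal, if_true, if_false, reduceIte, star_zero,
    mul_zero, zero_mul, add_zero, zero_add, one_div, Fin.succ_zero_eq_one, zero_ne_one,
    one_ne_zero, map_inv₀, map_zero]
  field_simp
  linear_combination
    -(A 0 0 * B 0 0 + A 0 1 * B 0 1 + A 1 0 * B 1 0 + A 1 1 * B 1 1) * h2

/-- The two POVMs are perfectly distinguishable with the maximally entangled
state: `(1/2)∑_{i,a} ⟨φ⁺|M_i^a ⊗ N_i^a|φ⁺⟩ = 1`. -/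
theorem perfect_discrimination_maxEnt :
    (1 / 2 : ℂ) * ∑ i : Fin 2, ∑ a : Fin 3,
        star phiPlus ⬝ᵥ ((M i a ⊗ₖ N i a) *ᵥ phiPlus) = 1 := by
  have h3 : (Real.sqrt 3 : ℂ) * (Real.sqrt 3 : ℂ) = 3 := by
    rw [← Complex.ofReal_mul, Real.mul_self_sqrt (by norm_num)]; norm_num
  have hs : (starRingEnd ℂ) 2 = 2 := map_ofNat _ 2
  simp only [Fin.sum_univ_two, Fin.sum_univ_three, key]
  simp only [M, N, v, vt_eq, ket, Matrix.vecMulVec_apply, Matrix.transpose_apply,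
    Matrix.smul_apply, Pi.star_apply, Matrix.cons_val_zero, Matrix.cons_val_one, Matrix.cons_val_two,
    Matrix.head_cons, Matrix.tail_cons, hs, Matrix.cons_val', Matrix.empty_val', Matrix.cons_val_fin_one,
    Matrix.head_fin_const, smul_eq_mul, Complex.star_def, map_div₀, _root_.map_one,
    map_neg, Complex.conj_ofReal, if_true, if_false, reduceIte, star_zero, star_one,
    add_zero, zero_add, mul_zero, zero_mul, mul_one, one_mul]
  ring_nf
  norm_num [Fin.ext_iff]
  linear_combination ((Real.sqrt 3 : ℂ) * (Real.sqrt 3 : ℂ) / 24 + 5 / 24) * h3
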